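/- Stability of the abstract stabilized mixed problem: assume the stabilized coercivity assumption holds with some α > 0, let (u, λ) ∈ V × M solve the abstract stabilized mixed problem (i)–(ii), and assume the three modified multipliers (0, λ_t), (2λ_n, λ_t) and (λ_n, 0) also belong to M. If moreover |L(v)| ≤ C₀ ‖v‖_V for all v ∈ V with some constant C₀ ≥ 0, then α ‖u‖_V² + ∫_Ω γ |λ|² dm ≤ C₀ ‖u‖_V − ∫_Ω g λ_n dm. -/

import Mathlib

open MeasureTheory

private lemma mul_int {Ω : Type*} [MeasurableSpace Ω] {m : Measure Ω} {f g : Ω → ℝ}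
    (hf : MemLp f 2 m) (hg : MemLp g 2 m) :
    Integrable (fun ω => f ω * g ω) m := by
  have h : MemLp (f • g) 1 m :=
    haveI : ENNReal.HolderTriple 2 2 1 := ⟨by simp [ENNReal.inv_two_add_inv_two]⟩
    hg.smul hf
  exact memLp_one_iff_integrable.mp h

private lemma wt {Ω : Type*} [MeasurableSpace Ω] {m : Measure Ω} {γ f : Ω → ℝ}
    (hγ : MemLp γ ⊤ m) (hf : MemLp f 2 m) :
    MemLp (fun ω => γ ω * f ω) 2 m := hf.smul hγ

/-- Stability of the abstract stabilized mixed problem: if `(u, λ)` solves (i)–(ii), the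
modified multipliers `(0, λₜ)`, `(2λₙ, λₜ)`, `(λₙ, 0)` belong to `M`, and `|L(v)| ≤ C₀‖v‖`,
then `α ‖u‖² + ∫ γ |λ|² dm ≤ C₀ ‖u‖ − ∫ g λₙ dm`. -/
theorem stabilized_mixed_stability
    {Ω : Type*} [MeasurableSpace Ω] (m : Measure Ω)
    (γ : Ω → ℝ) (hγ : MemLp γ ⊤ m) (hγpos : ∀ᵐ ω ∂m, 0 < γ ω)
    {V : Type*} [NormedAddCommGroup V] [InnerProductSpace ℝ V]
    (τ T : V →ₗ[ℝ] Ω → ℝ × ℝ)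
    (hτ : ∀ v : V, MemLp (τ v) 2 m) (hT : ∀ v : V, MemLp (T v) 2 m)
    (a : V →ₗ[ℝ] V →ₗ[ℝ] ℝ) (L : V →ₗ[ℝ] ℝ)
    (g : Ω → ℝ) (hg : MemLp g 2 m)
    (M : Set (Ω → ℝ × ℝ)) (hM : ∀ μ ∈ M, MemLp μ 2 m)
    (α : ℝ) (hα : 0 < α)
    (hcoer : ∀ v : V,
      α * ‖v‖ ^ 2 ≤ a v v - ∫ ω, γ ω * ((T v ω).1 ^ 2 + (T v ω).2 ^ 2) ∂m)
    (u : V) (l : Ω → ℝ × ℝ) (hl : l ∈ M)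
    (heq : ∀ v : V,
      a u v + (∫ ω, ((l ω).1 * (τ v ω).1 + (l ω).2 * (τ v ω).2) ∂m)
        - (∫ ω, γ ω * (((l ω).1 + (T u ω).1) * (T v ω).1
            + ((l ω).2 + (T u ω).2) * (T v ω).2) ∂m) = L v)
    (hineq : ∀ μ ∈ M,
      (∫ ω, (((μ ω).1 - (l ω).1) * (τ u ω).1
          + ((μ ω).2 - (l ω).2) * (τ u ω).2) ∂m)
        - (∫ ω, γ ω * (((μ ω).1 - (l ω).1) * ((l ω).1 + (T u ω).1)
            + ((μ ω).2 - (l ω).2) * ((l ω).2 + (T u ω).2)) ∂m)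
      ≤ ∫ ω, g ω * ((μ ω).1 - (l ω).1) ∂m)
    (hmod₁ : (fun ω => ((0 : ℝ), (l ω).2)) ∈ M)
    (hmod₂ : (fun ω => (2 * (l ω).1, (l ω).2)) ∈ M)
    (hmod₃ : (fun ω => ((l ω).1, (0 : ℝ))) ∈ M)
    (C₀ : ℝ) (hC₀ : 0 ≤ C₀) (hL : ∀ v : V, |L v| ≤ C₀ * ‖v‖) :
    α * ‖u‖ ^ 2 + (∫ ω, γ ω * ((l ω).1 ^ 2 + (l ω).2 ^ 2) ∂m)
      ≤ C₀ * ‖u‖ - ∫ ω, g ω * (l ω).1 ∂m := by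
  -- component membership in L²
  have hl2 := hM l hl
  have hln : MemLp (fun ω => (l ω).1) 2 m :=
    (ContinuousLinearMap.fst ℝ ℝ ℝ).comp_memLp' hl2
  have hlt : MemLp (fun ω => (l ω).2) 2 m :=
    (ContinuousLinearMap.snd ℝ ℝ ℝ).comp_memLp' hl2
  have hTn : MemLp (fun ω => (T u ω).1) 2 m :=
    (ContinuousLinearMap.fst ℝ ℝ ℝ).comp_memLp' (hT u)
  have hTt : MemLp (fun ω => (T u ω).2) 2 m :=
    (ContinuousLinearMap.snd ℝ ℝ ℝ).comp_memLp' (hT u)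
  have hτn : MemLp (fun ω => (τ u ω).1) 2 m :=
    (ContinuousLinearMap.fst ℝ ℝ ℝ).comp_memLp' (hτ u)
  have hτt : MemLp (fun ω => (τ u ω).2) 2 m :=
    (ContinuousLinearMap.snd ℝ ℝ ℝ).comp_memLp' (hτ u)
  -- abbreviations
  set P : ℝ := ∫ ω, (l ω).1 * (τ u ω).1 ∂m with hP
  set P' : ℝ := ∫ ω, (l ω).2 * (τ u ω).2 ∂m with hP'
  set Q : ℝ := ∫ ω, γ ω * ((l ω).1 * ((l ω).1 + (T u ω).1)) ∂m with hQ
  set Q' : ℝ := ∫ ω, γ ω * ((l ω).2 * ((l ω).2 + (T u ω).2)) ∂m with hQ'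
  set G : ℝ := ∫ ω, g ω * (l ω).1 ∂m with hG
  -- integrability facts
  have iP : Integrable (fun ω => (l ω).1 * (τ u ω).1) m := mul_int hln hτn
  have iP' : Integrable (fun ω => (l ω).2 * (τ u ω).2) m := mul_int hlt hτt
  have iA : Integrable (fun ω => γ ω * (((l ω).1 + (T u ω).1) * (T u ω).1
      + ((l ω).2 + (T u ω).2) * (T u ω).2)) m := by
    have h1 := mul_int (wt hγ (hln.add hTn)) hTn
    have h2 := mul_int (wt hγ (hlt.add hTt)) hTt
    exact (h1.add h2).congr (Filter.Eventually.of_forall fun ω => by simp; ring)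
  have iB : Integrable (fun ω => γ ω * ((T u ω).1 ^ 2 + (T u ω).2 ^ 2)) m := by
    have h1 := mul_int (wt hγ hTn) hTn
    have h2 := mul_int (wt hγ hTt) hTt
    exact (h1.add h2).congr (Filter.Eventually.of_forall fun ω => by simp; ring)
  have iC : Integrable (fun ω => γ ω * ((l ω).1 ^ 2 + (l ω).2 ^ 2)) m := by
    have h1 := mul_int (wt hγ hln) hln
    have h2 := mul_int (wt hγ hlt) hlt
    exact (h1.add h2).congr (Filter.Eventually.of_forall fun ω => by simp; ring)
  have iQ : Integrable (fun ω => γ ω * ((l ω).1 * ((l ω).1 + (T u ω).1))) m := by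
    have h1 := mul_int (wt hγ hln) (hln.add hTn)
    exact h1.congr (Filter.Eventually.of_forall fun ω => by simp; ring)
  have iQ' : Integrable (fun ω => γ ω * ((l ω).2 * ((l ω).2 + (T u ω).2))) m := by
    have h1 := mul_int (wt hγ hlt) (hlt.add hTt)
    exact h1.congr (Filter.Eventually.of_forall fun ω => by simp; ring)
  -- split the trace integral
  have hsplit : (∫ ω, ((l ω).1 * (τ u ω).1 + (l ω).2 * (τ u ω).2) ∂m) = P + P' :=
    integral_add iP iP'
  -- key algebraic identity among the γ-integrals
  have key : (∫ ω, γ ω * (((l ω).1 + (T u ω).1) * (T u ω).1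
        + ((l ω).2 + (T u ω).2) * (T u ω).2) ∂m)
      - (∫ ω, γ ω * ((T u ω).1 ^ 2 + (T u ω).2 ^ 2) ∂m)
      + (∫ ω, γ ω * ((l ω).1 ^ 2 + (l ω).2 ^ 2) ∂m) = Q + Q' := by
    have h1 : (∫ ω, (γ ω * (((l ω).1 + (T u ω).1) * (T u ω).1
          + ((l ω).2 + (T u ω).2) * (T u ω).2)
        - γ ω * ((T u ω).1 ^ 2 + (T u ω).2 ^ 2)
        + γ ω * ((l ω).1 ^ 2 + (l ω).2 ^ 2)) ∂m)
        = (∫ ω, γ ω * (((l ω).1 + (T u ω).1) * (T u ω).1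
            + ((l ω).2 + (T u ω).2) * (T u ω).2) ∂m)
          - (∫ ω, γ ω * ((T u ω).1 ^ 2 + (T u ω).2 ^ 2) ∂m)
          + (∫ ω, γ ω * ((l ω).1 ^ 2 + (l ω).2 ^ 2) ∂m) := by
      have iAB : Integrable (fun ω => γ ω * (((l ω).1 + (T u ω).1) * (T u ω).1
          + ((l ω).2 + (T u ω).2) * (T u ω).2)
          - γ ω * ((T u ω).1 ^ 2 + (T u ω).2 ^ 2)) m := iA.sub iB
      rw [integral_add iAB iC, integral_sub iA iB]
    have h2 : (∫ ω, (γ ω * (((l ω).1 + (T u ω).1) * (T u ω).1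
          + ((l ω).2 + (T u ω).2) * (T u ω).2)
        - γ ω * ((T u ω).1 ^ 2 + (T u ω).2 ^ 2)
        + γ ω * ((l ω).1 ^ 2 + (l ω).2 ^ 2)) ∂m) = Q + Q' := by
      rw [hQ, hQ', ← integral_add iQ iQ']
      exact integral_congr_ae (Filter.Eventually.of_forall fun ω => by ring)
    linarith [h1, h2]
  -- inequality with μ₁ = (0, λₜ)
  have h1 := hineq _ hmod₁
  simp only at h1
  have e11 : (∫ ω, ((0 - (l ω).1) * (τ u ω).1 + ((l ω).2 - (l ω).2) * (τ u ω).2) ∂m)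
      = -P := by
    rw [hP, ← integral_neg]
    exact integral_congr_ae (Filter.Eventually.of_forall fun ω => by ring)
  have e12 : (∫ ω, γ ω * ((0 - (l ω).1) * ((l ω).1 + (T u ω).1)
      + ((l ω).2 - (l ω).2) * ((l ω).2 + (T u ω).2)) ∂m) = -Q := by
    rw [hQ, ← integral_neg]
    exact integral_congr_ae (Filter.Eventually.of_forall fun ω => by ring)
  have e13 : (∫ ω, g ω * (0 - (l ω).1) ∂m) = -G := by
    rw [hG, ← integral_neg]
    exact integral_congr_ae (Filter.Eventually.of_forall fun ω => by ring)
  rw [e11, e12, e13] at h1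
  -- inequality with μ₂ = (2λₙ, λₜ)
  have h2 := hineq _ hmod₂
  simp only at h2
  have e21 : (∫ ω, ((2 * (l ω).1 - (l ω).1) * (τ u ω).1
      + ((l ω).2 - (l ω).2) * (τ u ω).2) ∂m) = P := by
    rw [hP]
    exact integral_congr_ae (Filter.Eventually.of_forall fun ω => by ring)
  have e22 : (∫ ω, γ ω * ((2 * (l ω).1 - (l ω).1) * ((l ω).1 + (T u ω).1)
      + ((l ω).2 - (l ω).2) * ((l ω).2 + (T u ω).2)) ∂m) = Q := by
    rw [hQ]
    exact integral_congr_ae (Filter.Eventually.of_forall fun ω => by ring)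
  have e23 : (∫ ω, g ω * (2 * (l ω).1 - (l ω).1) ∂m) = G := by
    rw [hG]
    exact integral_congr_ae (Filter.Eventually.of_forall fun ω => by ring)
  rw [e21, e22, e23] at h2
  -- inequality with μ₃ = (λₙ, 0)
  have h3 := hineq _ hmod₃
  simp only at h3
  have e31 : (∫ ω, (((l ω).1 - (l ω).1) * (τ u ω).1 + (0 - (l ω).2) * (τ u ω).2) ∂m)
      = -P' := by
    rw [hP', ← integral_neg]
    exact integral_congr_ae (Filter.Eventually.of_forall fun ω => by ring)
  have e32 : (∫ ω, γ ω * (((l ω).1 - (l ω).1) * ((l ω).1 + (T u ω).1)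
      + (0 - (l ω).2) * ((l ω).2 + (T u ω).2)) ∂m) = -Q' := by
    rw [hQ', ← integral_neg]
    exact integral_congr_ae (Filter.Eventually.of_forall fun ω => by ring)
  have e33 : (∫ ω, g ω * ((l ω).1 - (l ω).1) ∂m) = 0 := by
    simp
  rw [e31, e32, e33] at h3
  -- P - Q = G    and    Q' ≤ P'
  have hPQ : P - Q = G := le_antisymm (by linarith) (by linarith)
  have hQ'P' : Q' ≤ P' := by linarith
  -- equation tested with v = u
  have hu := heq u
  rw [hsplit] at hu
  -- coercivity
  have hco := hcoer u
  -- conclude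
  have hLu : L u ≤ C₀ * ‖u‖ := le_trans (le_abs_self _) (hL u)
  nlinarith [key, hu, hco, hLu, hQ'P', hPQ]
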